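/- If a connected simple graph G of order n realizes the multiset S_{j,n} = {0,1,...,n} \ {j} as its Laplacian spectrum, then the join K₁ ∨ G on n+1 vertices has Laplacian spectrum equal to the multiset {0,1,...,n+1} with j+1 and 1 removed and n+1 counted twice, i.e., K₁ ∨ G realizes S_{{1,j+1},n+1}^{n+1}. -/

import Mathlib

open SimpleGraph Polynomial

/-- The multiset of Laplacian eigenvalues (roots of the characteristic polynomial of the
Laplacian matrix over `ℝ`, with multiplicity) of a simple graph. -/
noncomputable def lapSpec {V : Type*} [Fintype V] [DecidableEq V] (G : SimpleGraph V) :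
    Multiset ℝ :=
  letI := Classical.decRel G.Adj
  ((G.lapMatrix ℝ).charpoly).roots

/-- The disjoint union of two simple graphs. -/
def graphUnion {α β : Type*} (G : SimpleGraph α) (H : SimpleGraph β) : SimpleGraph (α ⊕ β) :=
  SimpleGraph.fromRel fun x y =>
    (∃ a b, x = Sum.inl a ∧ y = Sum.inl b ∧ G.Adj a b) ∨
    (∃ a b, x = Sum.inr a ∧ y = Sum.inr b ∧ H.Adj a b)

/-- The join of two simple graphs: the disjoint union together with all edges between the parts. -/
def graphJoin {α β : Type*} (G : SimpleGraph α) (H : SimpleGraph β) : SimpleGraph (α ⊕ β) :=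
  SimpleGraph.fromRel fun x y =>
    (∃ a b, x = Sum.inl a ∧ y = Sum.inl b ∧ G.Adj a b) ∨
    (∃ a b, x = Sum.inr a ∧ y = Sum.inr b ∧ H.Adj a b) ∨
    (∃ a b, x = Sum.inl a ∧ y = Sum.inr b)

/-- `G` is a join of two nonempty graphs. -/
def IsJoin {γ : Type*} [Fintype γ] (G : SimpleGraph γ) : Prop :=
  ∃ (p q : ℕ) (F : SimpleGraph (Fin p)) (H : SimpleGraph (Fin q)),
    0 < p ∧ 0 < q ∧ Nonempty (G ≃g graphJoin F H)

/-- The multiset `S_{{i,j},n}^m`: the integers `0,1,…,n` with `i` and `j` removed and an extra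
copy of `m` added (so `m` is counted twice), viewed as a multiset of reals. -/
def Sdouble (i j n m : ℕ) : Multiset ℝ :=
  ((m ::ₘ (((Finset.range (n + 1)).val.erase i).erase j)).map (fun k : ℕ => (k : ℝ)))

/-- The multiset `S_{j,n} = {0,1,…,n} \ {j}`, viewed as a multiset of reals. -/
def Ssingle (j n : ℕ) : Multiset ℝ :=
  (((Finset.range (n + 1)).val.erase j).map (fun k : ℕ => (k : ℝ)))

/-- The one-vertex graph `K₁`. -/
def K1 : SimpleGraph (Fin 1) := ⊥

/-- The complete graph `K₂` on two vertices. -/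
def K2 : SimpleGraph (Fin 2) := ⊤

section Aux

open Matrix

variable {V : Type*} [Fintype V] [DecidableEq V] (G : SimpleGraph V)

lemma joinK1_adj_ll (a b : Fin 1) : ¬ (graphJoin K1 G).Adj (Sum.inl a) (Sum.inl b) := by
  simp [graphJoin, SimpleGraph.fromRel_adj, K1, Subsingleton.elim a b]

lemma joinK1_adj_lr (a : Fin 1) (v : V) : (graphJoin K1 G).Adj (Sum.inl a) (Sum.inr v) := by
  rw [graphJoin, SimpleGraph.fromRel_adj]
  exact ⟨by simp, Or.inl (Or.inr (Or.inr ⟨a, v, rfl, rfl⟩))⟩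

lemma joinK1_adj_rl (v : V) (a : Fin 1) : (graphJoin K1 G).Adj (Sum.inr v) (Sum.inl a) :=
  (joinK1_adj_lr G a v).symm

lemma joinK1_adj_rr (v w : V) :
    (graphJoin K1 G).Adj (Sum.inr v) (Sum.inr w) ↔ G.Adj v w := by
  rw [graphJoin, SimpleGraph.fromRel_adj]
  constructor
  · rintro ⟨hne, ((⟨a, b, ha, hb, hab⟩ | ⟨a, b, ha, hb, hab⟩ | ⟨a, b, ha, hb⟩) |
      (⟨a, b, ha, hb, hab⟩ | ⟨a, b, ha, hb, hab⟩ | ⟨a, b, ha, hb⟩))⟩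
    · exact absurd ha (by simp)
    · obtain rfl : v = a := Sum.inr.inj ha
      obtain rfl : w = b := Sum.inr.inj hb
      exact hab
    · exact absurd ha (by simp)
    · exact absurd ha (by simp)
    · obtain rfl : w = a := Sum.inr.inj ha
      obtain rfl : v = b := Sum.inr.inj hb
      exact hab.symm
    · exact absurd ha (by simp)
  · intro h
    refine ⟨by simp [h.ne], Or.inl (Or.inr (Or.inl ⟨v, w, rfl, rfl, h⟩))⟩

lemma lapMatrix_joinK1 [DecidableRel G.Adj] [DecidableRel (graphJoin K1 G).Adj] :
    (graphJoin K1 G).lapMatrix ℝ =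
      Matrix.fromBlocks (Matrix.of fun _ _ => (Fintype.card V : ℝ))
        (Matrix.of fun _ _ => (-1 : ℝ)) (Matrix.of fun _ _ => (-1 : ℝ))
        (G.lapMatrix ℝ + 1) := by
  ext i j
  rcases i with a | v <;> rcases j with b | w
  · obtain rfl : a = b := Subsingleton.elim _ _
    simp only [lapMatrix, degMatrix, Matrix.sub_apply, Matrix.diagonal_apply_eq,
      adjMatrix_apply, fromBlocks_apply₁₁, Matrix.of_apply]
    rw [if_neg (joinK1_adj_ll G a a), degree_eq_sum_if_adj, Fintype.sum_sum_type]
    have e1 : ∑ b : Fin 1, (if (graphJoin K1 G).Adj (Sum.inl a) (Sum.inl b) then (1:ℝ) else 0)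
        = 0 := by simp [joinK1_adj_ll]
    have e2 : ∑ v : V, (if (graphJoin K1 G).Adj (Sum.inl a) (Sum.inr v) then (1:ℝ) else 0)
        = Fintype.card V := by simp [joinK1_adj_lr, Finset.card_univ]
    rw [e1, e2]
    ring
  · simp only [lapMatrix, degMatrix, Matrix.sub_apply, adjMatrix_apply,
      fromBlocks_apply₁₂, Matrix.of_apply]
    rw [Matrix.diagonal_apply_ne _ (by simp), if_pos (joinK1_adj_lr G a w)]
    norm_num
  · simp only [lapMatrix, degMatrix, Matrix.sub_apply, adjMatrix_apply,
      fromBlocks_apply₂₁, Matrix.of_apply]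
    rw [Matrix.diagonal_apply_ne _ (by simp), if_pos (joinK1_adj_rl G v b)]
    norm_num
  · by_cases hvw : v = w
    · subst hvw
      simp only [lapMatrix, degMatrix, Matrix.sub_apply, Matrix.diagonal_apply_eq,
        adjMatrix_apply, fromBlocks_apply₂₂, Matrix.add_apply, Matrix.one_apply_eq]
      rw [if_neg (graphJoin K1 G).irrefl,
        if_neg (G.irrefl (v := v)), degree_eq_sum_if_adj, degree_eq_sum_if_adj]
      simp only [Fintype.sum_sum_type]
      have h1 : ∑ a : Fin 1, (if (graphJoin K1 G).Adj (Sum.inr v) (Sum.inl a) then (1:ℝ) else 0)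
          = 1 := by simp [joinK1_adj_rl]
      have h2 : ∑ w : V, (if (graphJoin K1 G).Adj (Sum.inr v) (Sum.inr w) then (1:ℝ) else 0)
          = ∑ w : V, (if G.Adj v w then (1:ℝ) else 0) := by
        refine Finset.sum_congr rfl fun w _ => ?_
        simp only [joinK1_adj_rr]
      rw [h1, h2]; ring
    · simp only [lapMatrix, degMatrix, Matrix.sub_apply, adjMatrix_apply,
        fromBlocks_apply₂₂, Matrix.add_apply]
      rw [Matrix.diagonal_apply_ne _ (by simp [hvw]), Matrix.diagonal_apply_ne _ hvw,
        Matrix.one_apply_ne hvw]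
      by_cases h : G.Adj v w
      · rw [if_pos ((joinK1_adj_rr G v w).mpr h), if_pos h]; ring
      · rw [if_neg (fun hc => h ((joinK1_adj_rr G v w).mp hc)), if_neg h]; ring

lemma charmatrix_add_one (M : Matrix V V ℝ) :
    charmatrix (M + 1) = (charmatrix M).map (Polynomial.aeval (X - 1 : ℝ[X])) := by
  ext i j
  by_cases h : i = j
  · subst h
    rw [Matrix.map_apply, charmatrix_apply_eq, charmatrix_apply_eq]
    simp only [Matrix.add_apply, Matrix.one_apply_eq, map_sub, aeval_X, aeval_C,
      algebraMap_eq, map_add, Polynomial.C_1]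
    ring
  · rw [Matrix.map_apply, charmatrix_apply_ne _ _ _ h, charmatrix_apply_ne _ _ _ h]
    simp [Matrix.add_apply, Matrix.one_apply_ne h, aeval_C, algebraMap_eq]

lemma charpoly_add_one (M : Matrix V V ℝ) :
    (M + 1).charpoly = aeval (X - 1 : ℝ[X]) M.charpoly := by
  rw [Matrix.charpoly, Matrix.charpoly, charmatrix_add_one, ← AlgHom.mapMatrix_apply,
    ← AlgHom.map_det]

lemma key_det (M : Matrix V V ℝ) (hrow : ∀ v, ∑ u, M v u = 0) :
    (X - 1 : ℝ[X]) *
      ((Matrix.fromBlocks (Matrix.of fun _ _ => (Fintype.card V : ℝ))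
        (Matrix.of fun _ _ => (-1 : ℝ)) (Matrix.of fun _ _ => (-1 : ℝ)) (M + 1) :
        Matrix (Fin 1 ⊕ V) (Fin 1 ⊕ V) ℝ)).charpoly =
    X * (X - (C (Fintype.card V : ℝ) + 1)) * (M + 1).charpoly := by
  classical
  set n : ℕ := Fintype.card V with hn
  set K := FractionRing ℝ[X]
  set f : ℝ[X] →+* K := algebraMap ℝ[X] K with hf
  have hinj : Function.Injective f := IsFractionRing.injective _ _
  have hX1 : (X - 1 : ℝ[X]) ≠ 0 := by
    have := Polynomial.X_sub_C_ne_zero (1 : ℝ)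
    simpa using this
  set u : K := f (X - 1) with hudef
  have hu : u ≠ 0 := fun h => hX1 (by
    apply hinj; rw [← hudef] at *; simpa [h] using h)
  set B : Matrix V V K := (charmatrix (M + 1)).map f with hB
  have hBrow : ∀ v, ∑ w, B v w = u := by
    intro v
    have hsum : ∑ w, charmatrix (M + 1) v w = X - 1 := by
      have h1 : ∑ w, charmatrix (M + 1) v w
          = ∑ w, ((Matrix.diagonal fun _ : V => (X : ℝ[X])) v w - C ((M + 1) v w)) :=
        Finset.sum_congr rfl fun w _ => by rw [charmatrix_apply]
      rw [h1, Finset.sum_sub_distrib]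
      have h2 : ∑ w, (Matrix.diagonal fun _ : V => (X : ℝ[X])) v w = X := by
        simp [Matrix.diagonal_apply]
      have h3 : ∑ w, C ((M + 1) v w) = C 1 := by
        rw [← map_sum]
        congr 1
        have : ∑ w, (M + 1) v w = (∑ w, M v w) + ∑ w, (1 : Matrix V V ℝ) v w := by
          rw [← Finset.sum_add_distrib]
          rfl
        rw [this, hrow]
        simp [Matrix.one_apply]
      rw [h2, h3]
      simp
    calc ∑ w, B v w = f (∑ w, charmatrix (M + 1) v w) := by
          rw [map_sum]
          rfl
      _ = u := by rw [hsum]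
  set A : Matrix (Fin 1 ⊕ V) (Fin 1 ⊕ V) K :=
    Matrix.fromBlocks (Matrix.of fun _ _ => f (X - C (n : ℝ))) (Matrix.of fun _ _ => 1)
      (Matrix.of fun _ _ => 1) B with hA
  have hAeq : (charmatrix (Matrix.fromBlocks (Matrix.of fun _ _ => (n : ℝ))
      (Matrix.of fun _ _ => (-1 : ℝ)) (Matrix.of fun _ _ => (-1 : ℝ)) (M + 1))).map f = A := by
    rw [charmatrix_fromBlocks, Matrix.fromBlocks_map, hA]
    ext i j
    rcases i with a | v <;> rcases j with b | w
    · obtain rfl : a = b := Subsingleton.elim _ _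
      simp [charmatrix_apply_eq]
    · simp
    · simp
    · rfl
  have hdetA : f (((Matrix.fromBlocks (Matrix.of fun _ _ => (n : ℝ))
      (Matrix.of fun _ _ => (-1 : ℝ)) (Matrix.of fun _ _ => (-1 : ℝ)) (M + 1)) :
      Matrix (Fin 1 ⊕ V) (Fin 1 ⊕ V) ℝ).charpoly)
      = A.det := by
    rw [Matrix.charpoly, RingHom.map_det, RingHom.mapMatrix_apply, hAeq]
  set w : Matrix V (Fin 1) K := Matrix.of fun _ _ => -u⁻¹ with hw
  set T : Matrix (Fin 1 ⊕ V) (Fin 1 ⊕ V) K := Matrix.fromBlocks 1 0 w 1 with hT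
  have hdetT : T.det = 1 := by
    rw [hT, Matrix.det_fromBlocks_zero₁₂]
    simp
  have hAT : A * T = Matrix.fromBlocks
      (Matrix.of fun _ _ => f (X - C (n : ℝ)) - (n : K) * u⁻¹) (Matrix.of fun _ _ => 1) 0 B := by
    rw [hA, hT, Matrix.fromBlocks_multiply]
    ext i j
    rcases i with a | v <;> rcases j with b | w'
    · simp only [Matrix.fromBlocks_apply₁₁, Matrix.add_apply, Matrix.mul_one, Matrix.mul_apply,
        Matrix.of_apply, hw]
      rw [Finset.sum_const]
      simp only [Finset.card_univ, ← hn, nsmul_eq_mul, mul_neg, mul_one]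
      ring
    · simp [Matrix.mul_apply]
    · simp only [Matrix.fromBlocks_apply₂₁, Matrix.add_apply, Matrix.mul_one, Matrix.mul_apply,
        Matrix.of_apply, hw, Matrix.zero_apply]
      have hsum : ∑ x : V, B v x * -u⁻¹ = -(u * u⁻¹) := by
        rw [← Finset.sum_mul, hBrow]
        ring
      rw [hsum, mul_inv_cancel₀ (a := u) (by exact hu)]
      ring
    · simp [Matrix.mul_apply]
  have hdet2 : A.det = (f (X - C (n : ℝ)) - (n : K) * u⁻¹) * B.det := by
    calc A.det = (A * T).det := by rw [Matrix.det_mul, hdetT, mul_one]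
      _ = _ := by
          rw [hAT, Matrix.det_fromBlocks_zero₂₁, Matrix.det_fin_one]
          rfl
  have hBdet : B.det = f ((M + 1).charpoly) := by
    rw [hB, Matrix.charpoly, RingHom.map_det, RingHom.mapMatrix_apply]
  apply hinj
  simp only [_root_.map_mul]
  rw [hdetA, hdet2, hBdet]
  have hnK : (n : K) = f (C (n : ℝ)) := by
    rw [Polynomial.C_eq_natCast, map_natCast]
  have e1 : u * (f (X - C (n : ℝ)) - (n : K) * u⁻¹)
      = f (X * (X - (C (n : ℝ) + 1))) := by
    have h2 : u * ((n : K) * u⁻¹) = (n : K) := by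
      rw [mul_comm, mul_assoc, inv_mul_cancel₀ (a := u) (by exact hu), mul_one]
    rw [mul_sub, h2, hudef, ← _root_.map_mul, hnK, ← _root_.map_sub]
    congr 1
    ring
  rw [← mul_assoc, e1, _root_.map_mul]

end Aux

/-- If a connected graph `G` of order `n` realizes `S_{j,n}`, then `K₁ ∨ G` realizes
`S_{{1,j+1},n+1}^{n+1}`. -/
theorem join_K1_realizes {V : Type*} [Fintype V] [DecidableEq V] (G : SimpleGraph V)
    (n j : ℕ) (hcard : Fintype.card V = n) (hG : G.Connected)
    (hj1 : 1 ≤ j) (hjn : j ≤ n) (hspec : lapSpec G = Ssingle j n) :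
    lapSpec (graphJoin K1 G) = Sdouble 1 (j + 1) (n + 1) (n + 1) := by
  letI : DecidableRel G.Adj := Classical.decRel _
  letI : DecidableRel (graphJoin K1 G).Adj := Classical.decRel _
  subst hcard
  set n := Fintype.card V with hn
  have hLSG : lapSpec G = (G.lapMatrix ℝ).charpoly.roots := rfl
  have hLSJ : lapSpec (graphJoin K1 G) = ((graphJoin K1 G).lapMatrix ℝ).charpoly.roots := rfl
  set M := G.lapMatrix ℝ with hM
  have hrow : ∀ v, ∑ u, M v u = 0 := by
    intro v
    have h := congrFun (G.lapMatrix_mulVec_const_eq_zero (R := ℝ)) v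
    simpa [Matrix.mulVec, dotProduct] using h
  have hmonic := M.charpoly_monic
  have hdeg : M.charpoly.natDegree = n := by
    rw [Matrix.charpoly_natDegree_eq_dim]
  have hjmem : j ∈ (Finset.range (n + 1)).val := by
    rw [Finset.mem_val, Finset.mem_range]
    omega
  have hcardS : Multiset.card (Ssingle j n) = n := by
    rw [Ssingle, Multiset.card_map, Multiset.card_erase_of_mem hjmem]
    simp
  have hroots : M.charpoly.roots = Ssingle j n := by
    rw [← hspec, hLSG]
  have hpM : M.charpoly = ((Ssingle j n).map fun a => X - C a).prod := by
    have h := C_leadingCoeff_mul_prod_multiset_X_sub_C (p := M.charpoly)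
      (by rw [hroots, hcardS, hdeg])
    rw [hmonic.leadingCoeff, map_one, one_mul] at h
    rw [← h, hroots]
  have hkey := key_det M hrow
  rw [← lapMatrix_joinK1 G] at hkey
  rw [charpoly_add_one, hpM] at hkey
  rw [← hn] at hkey
  -- pull out the root 0 from Ssingle
  have h0mem : (0 : ℕ) ∈ (Finset.range (n + 1)).val.erase j :=
    (Multiset.mem_erase_of_ne (by omega)).mpr (by rw [Finset.mem_val, Finset.mem_range]; omega)
  set s₀ : Multiset ℕ := ((Finset.range (n + 1)).val.erase j).erase 0 with hs₀
  have hSsplit : Ssingle j n = (((0 : ℕ) ::ₘ s₀).map fun k : ℕ => (k : ℝ)) := by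
    rw [Ssingle, hs₀]
    congr 1
    exact (Multiset.cons_erase h0mem).symm
  have haev : (aeval (X - 1 : ℝ[X])) (((Ssingle j n).map fun a => X - C a).prod)
      = (X - 1) * ((s₀.map fun k : ℕ => (k : ℝ)).map fun a => X - 1 - C a).prod := by
    rw [hSsplit, Multiset.map_map, Multiset.map_cons, Multiset.prod_cons, map_mul,
      map_multiset_prod, Multiset.map_map, Multiset.map_map]
    congr 1
    · simp
    · congr 1
      apply Multiset.map_congr rfl
      intro k _
      simp [Function.comp, algebraMap_eq]
  rw [haev] at hkey
  have hX1 : (X - 1 : ℝ[X]) ≠ 0 := by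
    have := Polynomial.X_sub_C_ne_zero (1 : ℝ)
    simpa using this
  have hpN : ((graphJoin K1 G).lapMatrix ℝ).charpoly
      = X * (X - (C (n : ℝ) + 1)) * ((s₀.map fun k : ℕ => (k : ℝ)).map fun a => X - 1 - C a).prod := by
    apply mul_left_cancel₀ hX1
    rw [hkey]
    ring
  -- identify the product with the Sdouble product
  have hr : (Finset.range (n + 2)).val = 0 ::ₘ ((Finset.range (n + 1)).val.map Nat.succ) := by
    rw [Finset.range_val, Finset.range_val]
    show Multiset.range (n + 2) = _
    rw [Multiset.range, List.range_succ_eq_map, Multiset.range]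
    simp
  have hs2 : ((Finset.range (n + 2)).val.erase 1).erase (j + 1)
      = 0 ::ₘ (s₀.map Nat.succ) := by
    rw [hr, Multiset.erase_cons_tail _ (by omega),
      show (1 : ℕ) = Nat.succ 0 from rfl,
      ← Multiset.map_erase _ Nat.succ_injective,
      Multiset.erase_cons_tail _ (by omega),
      show j + 1 = Nat.succ j from rfl,
      ← Multiset.map_erase _ Nat.succ_injective,
      hs₀, Multiset.erase_comm]
  have hSd : Sdouble 1 (j + 1) (n + 1) (n + 1)
      = (((n + 1 : ℕ) ::ₘ 0 ::ₘ (s₀.map Nat.succ)).map fun k : ℕ => (k : ℝ)) := by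
    rw [Sdouble, hs2]
  have hSd' : Sdouble 1 (j + 1) (n + 1) (n + 1)
      = ((n : ℝ) + 1) ::ₘ (0 : ℝ) ::ₘ (s₀.map fun k : ℕ => ((k : ℝ) + 1)) := by
    rw [hSd, Multiset.map_cons, Multiset.map_cons, Multiset.map_map]
    congr 1
    · push_cast
      ring
    congr 1
    · simp
    · apply Multiset.map_congr rfl
      intro k _
      simp [Function.comp]
  have hfun : (s₀.map ((fun a : ℝ => X - C a) ∘ fun k : ℕ => (k : ℝ) + 1))
      = s₀.map ((fun a : ℝ => X - 1 - C a) ∘ fun k : ℕ => (k : ℝ)) := by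
    apply Multiset.map_congr rfl
    intro k _
    simp only [Function.comp_apply]
    rw [map_add, Polynomial.C_1]
    ring
  have hprod : ((Sdouble 1 (j + 1) (n + 1) (n + 1)).map fun a => X - C a).prod
      = X * (X - (C (n : ℝ) + 1)) *
        ((s₀.map fun k : ℕ => (k : ℝ)).map fun a => X - 1 - C a).prod := by
    rw [hSd', Multiset.map_cons, Multiset.map_cons, Multiset.prod_cons, Multiset.prod_cons,
      Multiset.map_map, Multiset.map_map, hfun]
    rw [map_add, Polynomial.C_1, Polynomial.C_0]
    ring
  rw [hLSJ, hpN, ← hprod, Polynomial.roots_multiset_prod_X_sub_C]
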